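/- Let C ⊆ F_2^n be a binary code with covering radius 1 and |C| = 2^n/n (n even), and suppose C admits a partition P into disjoint pairs {c, c'} with Hamming distance d(c,c') = 1. For each pair let c ⊡ c' be the word obtained by replacing the single differing coordinate by □. Then the protected balls B^□_1(c ⊡ c') over all pairs in P are pairwise disjoint and their union is F_2^n; i.e., the box code {c ⊡ c' : {c,c'} ∈ P} is a perfect binary box code with 2^{n−1}/n codewords, length n−1, and minimum protected distance 3. -/

import Mathlib

/-- Protected distance between two binary words over `Option (Fin 2)`. -/
def pdist {η : ℕ} (w w' : Fin η → Option (Fin 2)) : ℕ :=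
  (Finset.univ.filter (fun i => ∃ a b : Fin 2, w i = some a ∧ w' i = some b ∧ a ≠ b)).card

/-- Protected distance to a fully protected word. -/
def pdistV {η : ℕ} (w : Fin η → Option (Fin 2)) (v : Fin η → Fin 2) : ℕ :=
  (Finset.univ.filter (fun i => ∃ a : Fin 2, w i = some a ∧ a ≠ v i)).card

/-- Number of protected coordinates of a word. -/
def plen {η : ℕ} (w : Fin η → Option (Fin 2)) : ℕ :=
  (Finset.univ.filter (fun i => (w i).isSome)).card

/-- The meshing `c ⊡ c'` of two words differing in a single coordinate: replace the
differing coordinate by `□`. -/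
def mesh {n : ℕ} (c c' : Fin n → Fin 2) : Fin n → Option (Fin 2) :=
  fun i => if c i = c' i then some (c i) else none

lemma fin2_eq_of_ne {a b c : Fin 2} (h1 : a ≠ c) (h2 : b ≠ c) : a = b := by
  fin_cases a <;> fin_cases b <;> fin_cases c <;> simp_all

lemma fin2_succ_ne (a : Fin 2) : a + 1 ≠ a := by fin_cases a <;> decide

lemma mesh_symm {n : ℕ} (a b : Fin n → Fin 2) : mesh a b = mesh b a := by
  funext i; unfold mesh
  by_cases h : a i = b i
  · rw [if_pos h, if_pos h.symm, h]
  · rw [if_neg h, if_neg (Ne.symm h)]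

lemma hamming_dist_one {n : ℕ} {a b : Fin n → Fin 2} (h : hammingDist a b = 1) :
    ∃ j, a j ≠ b j ∧ ∀ i, i ≠ j → a i = b i := by
  rw [hammingDist, Finset.card_eq_one] at h
  obtain ⟨j, hj⟩ := h
  refine ⟨j, ?_, ?_⟩
  · have : j ∈ ({j} : Finset (Fin n)) := Finset.mem_singleton_self j
    rw [← hj] at this; simpa using this
  · intro i hi
    by_contra hne
    have : i ∈ ({j} : Finset (Fin n)) := by rw [← hj]; simpa using hne
    exact hi (Finset.mem_singleton.mp this)

lemma ball_card {n : ℕ} (c : Fin n → Fin 2) :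
    (Finset.univ.filter fun v : Fin n → Fin 2 => hammingDist c v ≤ 1).card = n + 1 := by
  have he : (Finset.univ.filter fun v : Fin n → Fin 2 => hammingDist c v ≤ 1)
      = insert c ((Finset.univ : Finset (Fin n)).image
          fun i => Function.update c i (c i + 1)) := by
    ext v
    simp only [Finset.mem_filter, Finset.mem_univ, true_and, Finset.mem_insert,
      Finset.mem_image]
    constructor
    · intro hv
      rcases Nat.le_one_iff_eq_zero_or_eq_one.mp hv with h | h
      · left; exact (hammingDist_eq_zero.mp h).symm
      · right
        obtain ⟨j, hj, hall⟩ := hamming_dist_one h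
        refine ⟨j, ?_⟩
        funext i
        by_cases hij : i = j
        · subst hij
          rw [Function.update_self]
          exact fin2_eq_of_ne (fin2_succ_ne _) (Ne.symm hj)
        · rw [Function.update_of_ne hij]
          exact hall i hij
    · rintro (rfl | ⟨i, -, rfl⟩)
      · simp
      · have : hammingDist c (Function.update c i (c i + 1)) ≤ 1 := by
          rw [hammingDist]
          refine le_trans (Finset.card_le_card ?_) (by simp : ({i} : Finset (Fin n)).card ≤ 1)
          intro k hk
          simp only [Finset.mem_filter] at hk
          simp only [Finset.mem_singleton]
          by_contra hki
          exact hk.2 (by rw [Function.update_of_ne hki])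
        exact this
  rw [he]
  rw [Finset.card_insert_of_notMem, Finset.card_image_of_injective]
  · simp
  · intro i j hij
    by_contra hne
    have := congrFun hij i
    simp only [Function.update_self, Function.update_of_ne hne] at this
    simp at this
  · simp only [Finset.mem_image, not_exists]
    intro i hi
    have := congrFun hi.2 i
    simp only [Function.update_self] at this
    simp at this

lemma pdistV_mesh {n : ℕ} (c c₂ : Fin n → Fin 2) (v : Fin n → Fin 2) :
    pdistV (mesh c c₂) v = (Finset.univ.filter fun i => c i = c₂ i ∧ c i ≠ v i).card := by
  unfold pdistV mesh
  congr 1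
  apply Finset.filter_congr
  intro i _
  constructor
  · rintro ⟨a, ha, hav⟩
    by_cases h : c i = c₂ i
    · rw [if_pos h] at ha
      exact ⟨h, by injection ha with ha'; rw [ha']; exact hav⟩
    · rw [if_neg h] at ha; cases ha
  · rintro ⟨h, hv⟩
    exact ⟨c i, by rw [if_pos h], hv⟩

lemma pdistV_mesh_le {n : ℕ} (c c₂ : Fin n → Fin 2) (v : Fin n → Fin 2) :
    pdistV (mesh c c₂) v ≤ hammingDist c v := by
  rw [pdistV_mesh, hammingDist]
  apply Finset.card_le_card
  intro i hi
  simp only [Finset.mem_filter] at *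
  exact ⟨hi.1, hi.2.2⟩

lemma le_of_pdistV_le {n : ℕ} {c c₂ v : Fin n → Fin 2} (hd : hammingDist c c₂ = 1)
    (h : pdistV (mesh c c₂) v ≤ 1) : hammingDist c v ≤ 1 ∨ hammingDist c₂ v ≤ 1 := by
  obtain ⟨j, hj, hall⟩ := hamming_dist_one hd
  rw [pdistV_mesh] at h
  by_cases hv : v j = c j
  · left
    rw [hammingDist]
    refine le_trans (Finset.card_le_card ?_) h
    intro i hi
    simp only [Finset.mem_filter, Finset.mem_univ, true_and] at *
    have hij : i ≠ j := fun e => hi (e ▸ hv.symm)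
    exact ⟨hall i hij, hi⟩
  · right
    have hv2 : v j = c₂ j := fin2_eq_of_ne hv (Ne.symm hj)
    rw [hammingDist]
    refine le_trans (Finset.card_le_card ?_) h
    intro i hi
    simp only [Finset.mem_filter, Finset.mem_univ, true_and] at *
    have hij : i ≠ j := fun e => hi (e ▸ hv2.symm)
    have hcc : c i = c₂ i := hall i hij
    exact ⟨hcc, fun e => hi (hcc ▸ e)⟩

lemma mesh_eq_cases {n : ℕ} {c c₂ c' c₂' : Fin n → Fin 2} (h1 : hammingDist c c₂ = 1)
    (h2 : hammingDist c' c₂' = 1) (hm : mesh c c₂ = mesh c' c₂') :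
    (c' = c ∧ c₂' = c₂) ∨ (c' = c₂ ∧ c₂' = c) := by
  obtain ⟨j, hj, hall⟩ := hamming_dist_one h1
  obtain ⟨j', hj', hall'⟩ := hamming_dist_one h2
  have hjj : j' = j := by
    by_contra hne
    have := congrFun hm j'
    unfold mesh at this
    rw [if_pos (hall j' hne), if_neg hj'] at this
    cases this
  subst hjj
  have hoff : ∀ i, i ≠ j' → c i = c' i := by
    intro i hi
    have := congrFun hm i
    unfold mesh at this
    rw [if_pos (hall i hi), if_pos (hall' i hi)] at this
    injection this
  have hoff2 : ∀ i, i ≠ j' → c₂ i = c₂' i := by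
    intro i hi
    rw [← hall i hi, ← hall' i hi]
    exact hoff i hi
  by_cases hc : c' j' = c j'
  · left
    constructor
    · funext i
      by_cases hi : i = j'
      · subst hi; exact hc
      · exact (hoff i hi).symm
    · funext i
      by_cases hi : i = j'
      · subst hi
        have h1 : c₂' i ≠ c i := fun e => hj' (hc.trans e.symm)
        exact fin2_eq_of_ne h1 (Ne.symm hj)
      · exact (hoff2 i hi).symm
  · right
    constructor
    · funext i
      by_cases hi : i = j'
      · subst hi; exact fin2_eq_of_ne hc (Ne.symm hj)
      · rw [← hoff i hi, hall i hi]
    · funext i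
      by_cases hi : i = j'
      · subst hi
        have hcj : c' i = c₂ i := fin2_eq_of_ne hc (Ne.symm hj)
        have h1 : c₂' i ≠ c₂ i := fun e => hj' (hcj.trans e.symm)
        exact fin2_eq_of_ne h1 hj
      · rw [← hoff2 i hi, ← hall i hi]

lemma exists_close_both {n : ℕ} (w w' : Fin n → Option (Fin 2))
    (hd : (Finset.univ.filter fun i =>
      ∃ a b : Fin 2, w i = some a ∧ w' i = some b ∧ a ≠ b).card ≤ 2) :
    ∃ v : Fin n → Fin 2, pdistV w v ≤ 1 ∧ pdistV w' v ≤ 1 := by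
  classical
  set D := Finset.univ.filter fun i =>
      ∃ a b : Fin 2, w i = some a ∧ w' i = some b ∧ a ≠ b with hDdef
  have hex : ∃ D2 : Finset (Fin n), D2 ⊆ D ∧ D2.card ≤ 1 ∧ (D \ D2).card ≤ 1 := by
    rcases D.eq_empty_or_nonempty with h | h
    · exact ⟨∅, by simp, by simp, by simp [h]⟩
    · refine ⟨D.erase (D.min' h), Finset.erase_subset _ _, ?_, ?_⟩
      · rw [Finset.card_erase_of_mem (D.min'_mem h)]; omega
      · have hsub : D \ D.erase (D.min' h) ⊆ {D.min' h} := by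
          intro i hi
          simp only [Finset.mem_sdiff, Finset.mem_erase, not_and] at hi
          simp only [Finset.mem_singleton]
          by_contra hne
          exact (hi.2 hne) hi.1
        exact le_trans (Finset.card_le_card hsub) (by simp)
  obtain ⟨D2, hsub, h1, h2⟩ := hex
  refine ⟨fun i => if i ∈ D2 then (w' i).getD 0 else (w i).getD ((w' i).getD 0), ?_, ?_⟩
  · refine le_trans (Finset.card_le_card ?_) h1
    intro i hi
    simp only [pdistV, Finset.mem_filter, Finset.mem_univ, true_and] at hi
    obtain ⟨a, ha, hav⟩ := hi
    by_contra hm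
    exact hav (by simp [hm, ha])
  · refine le_trans (Finset.card_le_card ?_) h2
    intro i hi
    simp only [pdistV, Finset.mem_filter, Finset.mem_univ, true_and] at hi
    obtain ⟨b, hb, hbv⟩ := hi
    have hiD2 : i ∉ D2 := fun hm => hbv (by simp [hm, hb])
    rw [Finset.mem_sdiff]
    refine ⟨?_, hiD2⟩
    cases hw : w i with
    | none => exact absurd (show b = _ by simp [hiD2, hw, hb]) hbv
    | some a =>
      refine Finset.mem_filter.mpr ⟨Finset.mem_univ i, a, b, hw, hb, ?_⟩
      intro e
      exact hbv (by simp [hiD2, hw, e])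

theorem np1cc_perfect_box_code (n : ℕ) (hn : 2 ≤ n) (hne : Even n)
    (C : Finset (Fin n → Fin 2)) (hcard : C.card * n = 2 ^ n)
    (hcov : ∀ v : Fin n → Fin 2, ∃ c ∈ C, hammingDist c v ≤ 1)
    (pair : (Fin n → Fin 2) → (Fin n → Fin 2))
    (hpair : ∀ c ∈ C, pair c ∈ C ∧ pair (pair c) = c ∧ hammingDist c (pair c) = 1) :
    (∀ c ∈ C, ∀ c' ∈ C, mesh c (pair c) ≠ mesh c' (pair c') →
      ∀ v : Fin n → Fin 2,
        ¬(pdistV (mesh c (pair c)) v ≤ 1 ∧ pdistV (mesh c' (pair c')) v ≤ 1)) ∧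
    (∀ v : Fin n → Fin 2, ∃ c ∈ C, pdistV (mesh c (pair c)) v ≤ 1) ∧
    (C.image (fun c => mesh c (pair c))).card * (2 * n) = 2 ^ n ∧
    (∀ c ∈ C, plen (mesh c (pair c)) = n - 1) ∧
    (∀ c ∈ C, ∀ c' ∈ C, mesh c (pair c) ≠ mesh c' (pair c') →
      3 ≤ pdist (mesh c (pair c)) (mesh c' (pair c'))) := by
  classical
  have hpC : ∀ c ∈ C, pair c ∈ C := fun c hc => (hpair c hc).1
  have hInv : ∀ c ∈ C, pair (pair c) = c := fun c hc => (hpair c hc).2.1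
  have hD1 : ∀ c ∈ C, hammingDist c (pair c) = 1 := fun c hc => (hpair c hc).2.2
  have hneq : ∀ c ∈ C, c ≠ pair c := by
    intro c hc h
    have := hD1 c hc
    rw [← h, hammingDist_self] at this
    exact absurd this (by norm_num)
  -- counting: each v is covered exactly once (twice if v ∈ C)
  have hcount : ∀ v : Fin n → Fin 2,
      (C.filter fun c => hammingDist c v ≤ 1).card = if v ∈ C then 2 else 1 := by
    have hsum1 : ∑ v : Fin n → Fin 2, (C.filter fun c => hammingDist c v ≤ 1).card
        = C.card * (n + 1) := by
      have h1 : ∀ v : Fin n → Fin 2, (C.filter fun c => hammingDist c v ≤ 1).card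
          = ∑ c ∈ C, if hammingDist c v ≤ 1 then 1 else 0 :=
        fun v => Finset.card_filter _ _
      simp_rw [h1]
      rw [Finset.sum_comm]
      have h2 : ∀ c ∈ C, (∑ v : Fin n → Fin 2, if hammingDist c v ≤ 1 then 1 else 0) = n + 1 := by
        intro c _
        rw [← Finset.card_filter]
        exact ball_card c
      rw [Finset.sum_congr rfl h2, Finset.sum_const, smul_eq_mul]
    have hsum2 : ∑ v : Fin n → Fin 2, (if v ∈ C then 2 else 1) = 2 ^ n + C.card := by
      have : ∀ v : Fin n → Fin 2, (if v ∈ C then 2 else 1) = 1 + (if v ∈ C then 1 else 0) := by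
        intro v; split <;> rfl
      simp_rw [this]
      rw [Finset.sum_add_distrib, Finset.sum_const, ← Finset.card_filter]
      simp [Finset.filter_mem_eq_inter, Fintype.card_fun]
    have hle : ∀ v ∈ (Finset.univ : Finset (Fin n → Fin 2)),
        (if v ∈ C then 2 else 1) ≤ (C.filter fun c => hammingDist c v ≤ 1).card := by
      intro v _
      split
      · next hv =>
        have hsub : ({v, pair v} : Finset (Fin n → Fin 2))
            ⊆ C.filter fun c => hammingDist c v ≤ 1 := by
          intro x hx
          rcases Finset.mem_insert.mp hx with rfl | hx
          · exact Finset.mem_filter.mpr ⟨hv, by simp⟩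
          · rw [Finset.mem_singleton] at hx
            subst hx
            refine Finset.mem_filter.mpr ⟨hpC v hv, ?_⟩
            rw [hammingDist_comm]
            exact le_of_eq (hD1 v hv)
        calc (2 : ℕ) = ({v, pair v} : Finset (Fin n → Fin 2)).card := by
              rw [Finset.card_insert_of_notMem (by simpa using hneq v hv), Finset.card_singleton]
          _ ≤ _ := Finset.card_le_card hsub
      · obtain ⟨c, hc, hcd⟩ := hcov v
        exact Finset.card_pos.mpr ⟨c, Finset.mem_filter.mpr ⟨hc, hcd⟩⟩
    have heq : ∑ v : Fin n → Fin 2, (if v ∈ C then 2 else 1)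
        = ∑ v : Fin n → Fin 2, (C.filter fun c => hammingDist c v ≤ 1).card := by
      rw [hsum1, hsum2, Nat.mul_add, hcard, mul_one]
    intro v
    exact ((Finset.sum_eq_sum_iff_of_le hle).mp heq v (Finset.mem_univ v)).symm
  -- structure of covering codewords
  have hmemC : ∀ v ∈ C, ∀ a ∈ C, hammingDist a v ≤ 1 → a = v ∨ a = pair v := by
    intro v hv a ha had
    have hcv := hcount v
    rw [if_pos hv] at hcv
    have hsub : ({v, pair v} : Finset (Fin n → Fin 2))
        ⊆ C.filter fun c => hammingDist c v ≤ 1 := by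
      intro x hx
      rcases Finset.mem_insert.mp hx with rfl | hx
      · exact Finset.mem_filter.mpr ⟨hv, by simp⟩
      · rw [Finset.mem_singleton] at hx
        subst hx
        refine Finset.mem_filter.mpr ⟨hpC v hv, ?_⟩
        rw [hammingDist_comm]
        exact le_of_eq (hD1 v hv)
    have hcard2 : ({v, pair v} : Finset (Fin n → Fin 2)).card = 2 := by
      rw [Finset.card_insert_of_notMem (by simpa using hneq v hv), Finset.card_singleton]
    have heq : ({v, pair v} : Finset (Fin n → Fin 2))
        = C.filter fun c => hammingDist c v ≤ 1 :=
      Finset.eq_of_subset_of_card_le hsub (by rw [hcv, hcard2])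
    have : a ∈ ({v, pair v} : Finset (Fin n → Fin 2)) := by
      rw [heq]; exact Finset.mem_filter.mpr ⟨ha, had⟩
    simpa using this
  have huniq : ∀ v, v ∉ C → ∀ a ∈ C, ∀ b ∈ C,
      hammingDist a v ≤ 1 → hammingDist b v ≤ 1 → a = b := by
    intro v hv a ha b hb hav hbv
    have hcv := hcount v
    rw [if_neg hv] at hcv
    exact Finset.card_le_one.mp (le_of_eq hcv)
      a (Finset.mem_filter.mpr ⟨ha, hav⟩) b (Finset.mem_filter.mpr ⟨hb, hbv⟩)
  -- same mesh for pair-equivalent codewords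
  have hsame : ∀ c ∈ C, ∀ x, (x = c ∨ x = pair c) → mesh x (pair x) = mesh c (pair c) := by
    rintro c hc x (rfl | rfl)
    · rfl
    · rw [hInv c hc, mesh_symm]
  -- disjointness
  have hdisj : ∀ c ∈ C, ∀ c' ∈ C, mesh c (pair c) ≠ mesh c' (pair c') →
      ∀ v : Fin n → Fin 2,
        ¬(pdistV (mesh c (pair c)) v ≤ 1 ∧ pdistV (mesh c' (pair c')) v ≤ 1) := by
    rintro c hc c' hc' hnemesh v ⟨h1, h2⟩
    obtain ⟨a, haor, ha, hav⟩ : ∃ a, (a = c ∨ a = pair c) ∧ a ∈ C ∧ hammingDist a v ≤ 1 := by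
      rcases le_of_pdistV_le (hD1 c hc) h1 with h | h
      · exact ⟨c, Or.inl rfl, hc, h⟩
      · exact ⟨pair c, Or.inr rfl, hpC c hc, h⟩
    obtain ⟨b, hbor, hb, hbv⟩ : ∃ b, (b = c' ∨ b = pair c') ∧ b ∈ C ∧ hammingDist b v ≤ 1 := by
      rcases le_of_pdistV_le (hD1 c' hc') h2 with h | h
      · exact ⟨c', Or.inl rfl, hc', h⟩
      · exact ⟨pair c', Or.inr rfl, hpC c' hc', h⟩
    by_cases hvC : v ∈ C
    · have hA := hmemC v hvC a ha hav
      have hB := hmemC v hvC b hb hbv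
      apply hnemesh
      calc mesh c (pair c) = mesh a (pair a) := (hsame c hc a haor).symm
        _ = mesh v (pair v) := hsame v hvC a hA
        _ = mesh b (pair b) := (hsame v hvC b hB).symm
        _ = mesh c' (pair c') := hsame c' hc' b hbor
    · have hab : a = b := huniq v hvC a ha b hb hav hbv
      apply hnemesh
      calc mesh c (pair c) = mesh a (pair a) := (hsame c hc a haor).symm
        _ = mesh b (pair b) := by rw [hab]
        _ = mesh c' (pair c') := hsame c' hc' b hbor
  refine ⟨hdisj, ?_, ?_, ?_, ?_⟩
  -- coverage
  · intro v
    obtain ⟨c, hc, hcd⟩ := hcov v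
    exact ⟨c, hc, le_trans (pdistV_mesh_le c (pair c) v) hcd⟩
  -- cardinality
  · have hfiber : ∀ c ∈ C,
        C.filter (fun c' => mesh c' (pair c') = mesh c (pair c)) = {c, pair c} := by
      intro c hc
      ext x
      simp only [Finset.mem_filter, Finset.mem_insert, Finset.mem_singleton]
      constructor
      · rintro ⟨hx, hm⟩
        rcases mesh_eq_cases (hD1 x hx) (hD1 c hc) hm with ⟨rfl, -⟩ | ⟨h1, h2⟩
        · exact Or.inl rfl
        · right
          rw [← h2]
      · rintro (rfl | rfl)
        · exact ⟨hc, rfl⟩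
        · exact ⟨hpC c hc, hsame c hc (pair c) (Or.inr rfl)⟩
    have himg : C.card = (C.image (fun c => mesh c (pair c))).card * 2 := by
      rw [Finset.card_eq_sum_card_image (fun c => mesh c (pair c)) C]
      have h2 : ∀ b ∈ C.image (fun c => mesh c (pair c)),
          (C.filter (fun c' => mesh c' (pair c') = b)).card = 2 := by
        intro b hb
        obtain ⟨c, hc, rfl⟩ := Finset.mem_image.mp hb
        rw [hfiber c hc]
        rw [Finset.card_insert_of_notMem (by simpa using hneq c hc), Finset.card_singleton]
      rw [Finset.sum_congr rfl h2, Finset.sum_const, smul_eq_mul]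
    calc (C.image (fun c => mesh c (pair c))).card * (2 * n)
        = ((C.image (fun c => mesh c (pair c))).card * 2) * n := by ring
      _ = C.card * n := by rw [← himg]
      _ = 2 ^ n := hcard
  -- plen
  · intro c hc
    obtain ⟨j, hj, hall⟩ := hamming_dist_one (hD1 c hc)
    have he : (Finset.univ.filter fun i => (mesh c (pair c) i).isSome)
        = Finset.univ.erase j := by
      ext i
      simp only [Finset.mem_filter, Finset.mem_univ, true_and, Finset.mem_erase, and_true]
      unfold mesh
      by_cases hij : i = j
      · subst hij
        rw [if_neg hj]
        simp
      · rw [if_pos (hall i hij)]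
        simp [hij]
    rw [plen, he, Finset.card_erase_of_mem (Finset.mem_univ j)]
    simp
  -- min distance
  · intro c hc c' hc' hnemesh
    by_contra hlt
    push_neg at hlt
    obtain ⟨v, hv1, hv2⟩ := exists_close_both (mesh c (pair c)) (mesh c' (pair c'))
      (by rw [← pdist]; omega)
    exact hdisj c hc c' hc' hnemesh v ⟨hv1, hv2⟩
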